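/- arXiv:1405.0297 — 3 statements merged into one kernel-verified Lean document; each statement's English description precedes it below -/
import Mathlib

section
/- Let D ⊂ ℝ^d be open and κ-fat at every point of its closure with localization radius R ≤ 1/4 and κ ≤ 1/2, in the strengthened sense that for every z in the closure of D and every r ∈ (0, R] there exists a point A_r(z) ∈ D with B(A_r(z), κr) ⊂ D ∩ B(z, r). Fix z₀ ∈ ∂D and define D(z₀) = (D ∩ B(z₀,1)) ∪ ⋃_{z ∈ cl(D ∩ B(z₀,1))} ⋃_{r ∈ (0,R]} B(A_r(z), κr). Then D ∩ B(z₀,1) ⊂ D(z₀) ⊂ D ∩ B(z₀,2), and D(z₀) is κ₁-fat with localization radius R for κ₁ = κ/32: for every w in the closure of D(z₀) and every s ∈ (0,R] there exists a point Ã_s(w) ∈ D(z₀) such that B(Ã_s(w), κ₁ s) ⊂ D(z₀) ∩ B(w, s). -/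
open Metric Set

theorem localization_of_fat_set
    (d : ℕ) (D : Set (EuclideanSpace ℝ (Fin d))) (hD : IsOpen D)
    (κ R : ℝ) (hκ : 0 < κ) (hκ' : κ ≤ 1 / 2) (hR : 0 < R) (hR' : R ≤ 1 / 4)
    (A : EuclideanSpace ℝ (Fin d) → ℝ → EuclideanSpace ℝ (Fin d))
    (hA : ∀ z ∈ closure D, ∀ r : ℝ, 0 < r → r ≤ R →
      A z r ∈ D ∧ ball (A z r) (κ * r) ⊆ D ∩ ball z r)
    (z₀ : EuclideanSpace ℝ (Fin d)) (hz₀ : z₀ ∈ frontier D)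
    (Dz : Set (EuclideanSpace ℝ (Fin d)))
    (hDz : Dz = (D ∩ ball z₀ 1) ∪
      ⋃ z ∈ closure (D ∩ ball z₀ 1), ⋃ r ∈ Ioc (0 : ℝ) R, ball (A z r) (κ * r)) :
    D ∩ ball z₀ 1 ⊆ Dz ∧ Dz ⊆ D ∩ ball z₀ 2 ∧
      ∀ w ∈ closure Dz, ∀ s : ℝ, 0 < s → s ≤ R →
        ∃ Atil ∈ Dz, ball Atil ((κ / 32) * s) ⊆ Dz ∩ ball w s := by
  subst hDz
  have hballs : ∀ z ∈ closure (D ∩ ball z₀ 1), ∀ r : ℝ, 0 < r → r ≤ R →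
      ball (A z r) (κ * r) ⊆ (D ∩ ball z₀ 1) ∪
        ⋃ z ∈ closure (D ∩ ball z₀ 1), ⋃ r ∈ Ioc (0:ℝ) R, ball (A z r) (κ * r) := by
    intro z hz r hr hrR x hx
    exact Or.inr (mem_iUnion₂.mpr ⟨z, hz, mem_iUnion₂.mpr ⟨r, ⟨hr, hrR⟩, hx⟩⟩)
  refine ⟨subset_union_left, ?_, ?_⟩
  · rintro x (⟨hxD, hx1⟩ | hx)
    · exact ⟨hxD, mem_ball.mpr (lt_trans (mem_ball.mp hx1) one_lt_two)⟩
    · simp only [mem_iUnion, exists_prop] at hx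
      obtain ⟨z, hz, r, ⟨hr0, hrR⟩, hx⟩ := hx
      have hzD : z ∈ closure D := closure_mono inter_subset_left hz
      obtain ⟨-, h2⟩ := hA z hzD r hr0 hrR
      have hxd := h2 hx
      have hz1 : dist z z₀ ≤ 1 := by
        have hzb : z ∈ closure (ball z₀ 1) := closure_mono inter_subset_right hz
        exact mem_closedBall.mp (Metric.closure_ball_subset_closedBall hzb)
      refine ⟨hxd.1, mem_ball.mpr ?_⟩
      have hxz := mem_ball.mp hxd.2
      calc dist x z₀ ≤ dist x z + dist z z₀ := dist_triangle _ _ _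
        _ < r + 1 := by linarith
        _ ≤ 2 := by linarith
  · intro w hw s hs hsR
    have hκs : 0 < κ * s := mul_pos hκ hs
    have hκs' : κ * s ≤ s / 2 := by nlinarith
    by_cases hw1 : w ∈ closure (D ∩ ball z₀ 1)
    · have hwD : w ∈ closure D := closure_mono inter_subset_left hw1
      obtain ⟨hAin, hAb⟩ := hA w hwD s hs hsR
      have hmem := hballs w hw1 s hs hsR
      refine ⟨A w s, hmem (mem_ball_self (by positivity)), ?_⟩
      intro y hy
      have hy' : y ∈ ball (A w s) (κ * s) := ball_subset_ball (by nlinarith) hy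
      exact ⟨hmem hy', (hAb hy').2⟩
    · rw [closure_union] at hw
      have hw2 := hw.resolve_left hw1
      obtain ⟨w', hw'mem, hw'd⟩ := Metric.mem_closure_iff.mp hw2 (s/4) (by positivity)
      simp only [mem_iUnion, exists_prop] at hw'mem
      obtain ⟨z, hz, r, ⟨hr0, hrR⟩, hw'⟩ := hw'mem
      have hzD : z ∈ closure D := closure_mono inter_subset_left hz
      obtain ⟨hAzr, hAb⟩ := hA z hzD r hr0 hrR
      have hw'z : dist w' z < r := mem_ball.mp (hAb hw').2
      have hzw' : dist z w' < r := by rw [dist_comm]; exact hw'z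
      have hw'w : dist w' w < s / 4 := by rw [dist_comm]; exact hw'd
      rcases le_or_gt r (s/4) with hr | hr
      · -- small r : use A z (s/2)
        obtain ⟨h1, h2⟩ := hA z hzD (s/2) (by positivity) (by linarith)
        have hmem := hballs z hz (s/2) (by positivity) (by linarith)
        refine ⟨A z (s/2), hmem (mem_ball_self (by positivity)), ?_⟩
        intro y hy
        have hy' : y ∈ ball (A z (s/2)) (κ * (s/2)) := ball_subset_ball (by nlinarith) hy
        refine ⟨hmem hy', mem_ball.mpr ?_⟩
        have hyz : dist y z < s/2 := mem_ball.mp (h2 hy').2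
        calc dist y w ≤ dist y z + dist z w' + dist w' w := dist_triangle4 _ _ _ _
          _ < s/2 + r + s/4 := by linarith
          _ ≤ s := by linarith
      · -- large r : move from w' toward A z r
        set t : ℝ := s / (4 * r) with ht
        have ht0 : 0 < t := by positivity
        have htr : t * r = s / 4 := by
          rw [ht]; field_simp
        have ht1 : t < 1 := by
          rw [ht, div_lt_one (by linarith)]; linarith
        set Atil := w' + t • (A z r - w') with hAtil
        have hw'A : dist w' (A z r) < κ * r := mem_ball.mp hw'
        have hdA : dist Atil (A z r) = (1 - t) * dist w' (A z r) := by
          rw [dist_eq_norm, dist_eq_norm]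
          have he : Atil - A z r = (1 - t) • (w' - A z r) := by
            rw [hAtil]; module
          rw [he, norm_smul, Real.norm_of_nonneg (by linarith)]
        have hdw' : dist Atil w' = t * dist w' (A z r) := by
          rw [dist_eq_norm]
          have he : Atil - w' = t • (A z r - w') := by rw [hAtil]; module
          rw [he, norm_smul, Real.norm_of_nonneg ht0.le, ← dist_eq_norm, dist_comm]
        have h4 : t * (κ * r) = κ * s / 4 := by rw [mul_comm κ r, ← mul_assoc, htr]; ring
        have hdA' : dist Atil (A z r) ≤ (1 - t) * (κ * r) := by
          rw [hdA]; nlinarith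
        have hexp : (1 - t) * (κ * r) = κ * r - κ * s / 4 := by rw [← h4]; ring
        have hκs4 : 0 < κ * s / 4 := by positivity
        have hin : Atil ∈ ball (A z r) (κ * r) := by
          rw [mem_ball]; linarith
        have hsubball : ball Atil ((κ/32) * s) ⊆ ball (A z r) (κ * r) := by
          intro y hy
          rw [mem_ball] at hy ⊢
          calc dist y (A z r) ≤ dist y Atil + dist Atil (A z r) := dist_triangle _ _ _
            _ < κ/32 * s + (κ * r - κ * s / 4) := by linarith
            _ ≤ κ * r := by nlinarith
        have hmem := hballs z hz r hr0 hrR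
        refine ⟨Atil, hmem hin, ?_⟩
        intro y hy
        refine ⟨hmem (hsubball hy), mem_ball.mpr ?_⟩
        have hdw'2 : dist Atil w' ≤ κ * s / 4 := by
          rw [hdw', ← h4]; nlinarith
        have hyA : dist y Atil < κ/32 * s := mem_ball.mp hy
        calc dist y w ≤ dist y Atil + dist Atil w' + dist w' w := dist_triangle4 _ _ _ _
          _ < κ * s / 32 + κ * s / 4 + s / 4 := by linarith
          _ ≤ s := by linarith
end

section
/- Let h : ℝ^{d-1} → ℝ be bounded and let f : ℝ^{d-1} → [0,∞) be Lipschitz with f(x̃) = 0 for |x̃| ≤ 1. Let A = {(x̃, x_d) ∈ ℝ^{d-1} × ℝ : |x̃| > 1, h(x̃) < x_d ≤ f(x̃) + h(x̃)}. Then there exists a constant c₁ ≥ 1 (depending only on the Lipschitz constant of f and the bound on h) such that |x̃| ≤ |x| ≤ c₁|x̃| for every x = (x̃, x_d) ∈ A, and consequently c₁^{-d} ∫_{|x̃|>1} f(x̃)|x̃|^{-d} dx̃ ≤ ∫_A |x|^{-d} dx ≤ ∫_{|x̃|>1} f(x̃)|x̃|^{-d} dx̃ · c₂ for some constant c₂ depending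 only on c₁. In particular, ∫_A |x|^{-d} dx < ∞ if and only if ∫_{|x̃|>1} f(x̃)|x̃|^{-d} dx̃ < ∞. -/
open Metric Set MeasureTheory ENNReal

theorem graph_region_integral_comparison
    (d : ℕ) (hd : 2 ≤ d)
    (h : EuclideanSpace ℝ (Fin (d - 1)) → ℝ) (M : ℝ) (hM : ∀ x, |h x| ≤ M)
    (f : EuclideanSpace ℝ (Fin (d - 1)) → ℝ) (L : NNReal) (hf : LipschitzWith L f)
    (hf0 : ∀ x, 0 ≤ f x) (hf1 : ∀ x, ‖x‖ ≤ 1 → f x = 0)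
    (A : Set (EuclideanSpace ℝ (Fin (d - 1)) × ℝ))
    (hA : A = {p | 1 < ‖p.1‖ ∧ h p.1 < p.2 ∧ p.2 ≤ f p.1 + h p.1}) :
    ∃ c₁ : ℝ, 1 ≤ c₁ ∧
      (∀ p ∈ A, ‖p.1‖ ≤ Real.sqrt (‖p.1‖ ^ 2 + p.2 ^ 2) ∧
        Real.sqrt (‖p.1‖ ^ 2 + p.2 ^ 2) ≤ c₁ * ‖p.1‖) ∧
      ∃ c₂ : ℝ, 0 < c₂ ∧
        ENNReal.ofReal (c₁ ^ (-(d : ℝ))) *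
            (∫⁻ x in {x : EuclideanSpace ℝ (Fin (d - 1)) | 1 < ‖x‖},
              ENNReal.ofReal (f x * ‖x‖ ^ (-(d : ℝ)))) ≤
          (∫⁻ p in A, ENNReal.ofReal ((Real.sqrt (‖p.1‖ ^ 2 + p.2 ^ 2)) ^ (-(d : ℝ)))) ∧
        (∫⁻ p in A, ENNReal.ofReal ((Real.sqrt (‖p.1‖ ^ 2 + p.2 ^ 2)) ^ (-(d : ℝ)))) ≤
          ENNReal.ofReal c₂ *
            (∫⁻ x in {x : EuclideanSpace ℝ (Fin (d - 1)) | 1 < ‖x‖},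
              ENNReal.ofReal (f x * ‖x‖ ^ (-(d : ℝ)))) ∧
        ((∫⁻ p in A, ENNReal.ofReal ((Real.sqrt (‖p.1‖ ^ 2 + p.2 ^ 2)) ^ (-(d : ℝ)))) < ⊤ ↔
          (∫⁻ x in {x : EuclideanSpace ℝ (Fin (d - 1)) | 1 < ‖x‖},
            ENNReal.ofReal (f x * ‖x‖ ^ (-(d : ℝ)))) < ⊤) := by
  classical
  have hM0 : 0 ≤ M := (abs_nonneg _).trans (hM 0)
  have hL0 : (0:ℝ) ≤ (L : ℝ) := L.coe_nonneg
  set c₁ : ℝ := 1 + (L : ℝ) + M with hc₁def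
  have hc₁1 : (1:ℝ) ≤ c₁ := by rw [hc₁def]; linarith
  have hc₁0 : (0:ℝ) < c₁ := lt_of_lt_of_le one_pos hc₁1
  -- f x ≤ L * ‖x‖
  have hfL : ∀ x : EuclideanSpace ℝ (Fin (d - 1)), f x ≤ (L:ℝ) * ‖x‖ := by
    intro x
    have h0 : f 0 = 0 := hf1 0 (by simp)
    calc f x = f x - f 0 := by rw [h0]; ring
      _ ≤ |f x - f 0| := le_abs_self _
      _ = dist (f x) (f 0) := (Real.dist_eq _ _).symm
      _ ≤ (L:ℝ) * dist x 0 := hf.dist_le_mul x 0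
      _ = (L:ℝ) * ‖x‖ := by rw [dist_zero_right]
  -- key pointwise inequality
  have key : ∀ (x : EuclideanSpace ℝ (Fin (d - 1))) (t : ℝ), 1 ≤ ‖x‖ → -M ≤ t → t ≤ f x + M →
      ‖x‖ ≤ Real.sqrt (‖x‖^2 + t^2) ∧ Real.sqrt (‖x‖^2 + t^2) ≤ c₁ * ‖x‖ := by
    intro x t hx hmt htm
    have hx0 : (0:ℝ) ≤ ‖x‖ := norm_nonneg x
    have habs : |t| ≤ ((L:ℝ) + M) * ‖x‖ := by
      have hMx : M * 1 ≤ M * ‖x‖ := mul_le_mul_of_nonneg_left hx hM0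
      have hLx : (0:ℝ) ≤ (L:ℝ) * ‖x‖ := mul_nonneg hL0 hx0
      rw [abs_le]
      constructor
      · nlinarith
      · nlinarith [hfL x]
    constructor
    · calc ‖x‖ = Real.sqrt (‖x‖^2) := by rw [Real.sqrt_sq hx0]
        _ ≤ Real.sqrt (‖x‖^2 + t^2) := Real.sqrt_le_sqrt (by nlinarith [sq_nonneg t])
    · calc Real.sqrt (‖x‖^2 + t^2) ≤ Real.sqrt ((c₁ * ‖x‖)^2) := by
            apply Real.sqrt_le_sqrt
            simp only [hc₁def]
            nlinarith [sq_abs t, mul_self_le_mul_self (abs_nonneg t) habs,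
              mul_nonneg (mul_nonneg (add_nonneg hL0 hM0) hx0) hx0,
              mul_nonneg hL0 hM0, sq_nonneg ‖x‖]
        _ = c₁ * ‖x‖ := Real.sqrt_sq (by positivity)
  -- membership in A gives the hypotheses of `key`
  have hAmem : ∀ p : EuclideanSpace ℝ (Fin (d - 1)) × ℝ, p ∈ A → 1 < ‖p.1‖ ∧ -M < p.2 ∧ p.2 ≤ f p.1 + M := by
    intro p hp
    rw [hA] at hp
    obtain ⟨h1, h2, h3⟩ := hp
    have hhp := abs_le.1 (hM p.1)
    exact ⟨h1, lt_of_le_of_lt hhp.1 h2, h3.trans (by linarith [hhp.2])⟩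
  -- measurability
  have hfm : Measurable f := hf.continuous.measurable
  set U : Set (EuclideanSpace ℝ (Fin (d - 1))) := {x : EuclideanSpace ℝ (Fin (d - 1)) | 1 < ‖x‖} with hUdef
  have hUmeas : MeasurableSet U := measurableSet_lt measurable_const measurable_norm
  set S : Set (EuclideanSpace ℝ (Fin (d - 1))) := {x | 1 < ‖x‖ ∧ 0 < f x} with hSdef
  have hSmeas : MeasurableSet S :=
    (measurableSet_lt measurable_const measurable_norm).inter (measurableSet_lt measurable_const hfm)
  have hSsubU : S ⊆ U := fun x hx => hx.1
  set u : EuclideanSpace ℝ (Fin (d - 1)) → ℝ≥0∞ := fun x => ENNReal.ofReal (‖x‖ ^ (-(d:ℝ))) with hu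
  have hum : Measurable u := by
    apply Measurable.ennreal_ofReal
    fun_prop
  have hFm : Measurable (fun x : EuclideanSpace ℝ (Fin (d - 1)) =>
      ENNReal.ofReal (f x * ‖x‖ ^ (-(d:ℝ)))) := by
    apply Measurable.ennreal_ofReal
    exact hfm.mul (by fun_prop)
  -- the sets B and W
  set B : Set (EuclideanSpace ℝ (Fin (d - 1)) × ℝ) :=
    {p | p.1 ∈ S ∧ -M < p.2 ∧ p.2 ≤ f p.1 + M} with hBdef
  have hBmeas : MeasurableSet B := by
    have h1 : MeasurableSet {p : EuclideanSpace ℝ (Fin (d - 1)) × ℝ | p.1 ∈ S} :=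
      measurable_fst hSmeas
    have h2 : MeasurableSet {p : EuclideanSpace ℝ (Fin (d - 1)) × ℝ | -M < p.2} :=
      measurableSet_lt measurable_const measurable_snd
    have h3 : MeasurableSet {p : EuclideanSpace ℝ (Fin (d - 1)) × ℝ | p.2 ≤ f p.1 + M} :=
      measurableSet_le measurable_snd ((hfm.comp measurable_fst).add measurable_const)
    exact h1.inter (h2.inter h3)
  set W : Set (EuclideanSpace ℝ (Fin (d - 1)) × ℝ) := toMeasurable volume A ∩ B with hWdef
  have hAB : A ⊆ B := by
    intro p hp
    have h4 := hAmem p hp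
    rw [hA] at hp
    exact ⟨⟨hp.1, by linarith [hp.2.1, hp.2.2]⟩, h4.2.1, h4.2.2⟩
  have hAW : A ⊆ W := fun p hp => ⟨subset_toMeasurable _ _ hp, hAB hp⟩
  have hWmeas : MeasurableSet W := (measurableSet_toMeasurable _ _).inter hBmeas
  have hres : volume.restrict A = volume.restrict W := by
    apply le_antisymm
    · exact Measure.restrict_mono hAW le_rfl
    · rw [← Measure.restrict_toMeasurable_of_sFinite A]
      exact Measure.restrict_mono Set.inter_subset_left le_rfl
  have hslice : ∀ x, MeasurableSet {t : ℝ | (x, t) ∈ W} :=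
    fun x => measurable_prodMk_left hWmeas
  -- Tonelli for functions of the first coordinate over W
  have fub : ∀ c : EuclideanSpace ℝ (Fin (d - 1)) → ℝ≥0∞, Measurable c →
      (∫⁻ p in W, c p.1) = ∫⁻ x, c x * volume {t : ℝ | (x, t) ∈ W} := by
    intro c hc
    rw [← lintegral_indicator hWmeas, Measure.volume_eq_prod,
      lintegral_prod (W.indicator fun p => c p.1)
        ((hc.comp measurable_fst).indicator hWmeas).aemeasurable]
    congr 1
    funext x
    have hxind : (fun t => W.indicator (fun p => c p.1) (x, t))
        = {t : ℝ | (x, t) ∈ W}.indicator (fun _ => c x) := by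
      funext t
      by_cases ht : (x, t) ∈ W <;> simp [Set.indicator, ht]
    rw [hxind, lintegral_indicator (hslice x), setLIntegral_const]
  -- slice bounds
  have slice_lb : ∀ x, ENNReal.ofReal (f x) ≤ volume {t : ℝ | (x, t) ∈ W} := by
    intro x
    by_cases hx : 1 < ‖x‖
    · have hsub : Set.Ioc (h x) (f x + h x) ⊆ {t : ℝ | (x, t) ∈ W} := by
        intro t ht
        exact hAW (by rw [hA]; exact ⟨hx, ht.1, ht.2⟩)
      calc ENNReal.ofReal (f x) = volume (Set.Ioc (h x) (f x + h x)) := by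
            rw [Real.volume_Ioc, add_sub_cancel_right]
        _ ≤ _ := measure_mono hsub
    · rw [hf1 x (le_of_not_gt hx)]
      simp
  have slice_ub : ∀ x, volume {t : ℝ | (x, t) ∈ W}
      ≤ S.indicator (fun x => ENNReal.ofReal (f x + 2*M)) x := by
    intro x
    by_cases hx : x ∈ S
    · rw [Set.indicator_of_mem hx]
      have hsub : {t : ℝ | (x, t) ∈ W} ⊆ Set.Ioc (-M) (f x + M) :=
        fun t ht => ⟨ht.2.2.1, ht.2.2.2⟩
      calc volume {t : ℝ | (x, t) ∈ W} ≤ volume (Set.Ioc (-M) (f x + M)) := measure_mono hsub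
        _ = ENNReal.ofReal (f x + M - (-M)) := Real.volume_Ioc
        _ = ENNReal.ofReal (f x + 2*M) := by congr 1; ring
    · rw [Set.indicator_of_notMem hx]
      have hempty : {t : ℝ | (x, t) ∈ W} = ∅ :=
        eq_empty_of_forall_notMem (fun t ht => hx ht.2.1)
      rw [hempty, measure_empty]
  -- pointwise bounds on W
  have hW1 : ∀ p : EuclideanSpace ℝ (Fin (d - 1)) × ℝ, p ∈ W → 1 < ‖p.1‖ :=
    fun p hp => hp.2.1.1
  have hdnn : -(d:ℝ) ≤ 0 := neg_nonpos.2 (Nat.cast_nonneg d)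
  have gub : ∀ p : EuclideanSpace ℝ (Fin (d - 1)) × ℝ, p ∈ W →
      ENNReal.ofReal ((Real.sqrt (‖p.1‖^2 + p.2^2)) ^ (-(d:ℝ))) ≤ u p.1 := by
    intro p hp
    have h1 : (0:ℝ) < ‖p.1‖ := lt_trans one_pos (hW1 p hp)
    have h2 : ‖p.1‖ ≤ Real.sqrt (‖p.1‖^2 + p.2^2) :=
      (key p.1 p.2 (le_of_lt (hW1 p hp)) (le_of_lt hp.2.2.1) hp.2.2.2).1
    exact ENNReal.ofReal_le_ofReal (Real.rpow_le_rpow_of_nonpos h1 h2 hdnn)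
  have glb : ∀ p : EuclideanSpace ℝ (Fin (d - 1)) × ℝ, p ∈ W →
      ENNReal.ofReal (c₁ ^ (-(d:ℝ))) * u p.1
        ≤ ENNReal.ofReal ((Real.sqrt (‖p.1‖^2 + p.2^2)) ^ (-(d:ℝ))) := by
    intro p hp
    have h1 : (0:ℝ) < ‖p.1‖ := lt_trans one_pos (hW1 p hp)
    have hk := key p.1 p.2 (le_of_lt (hW1 p hp)) (le_of_lt hp.2.2.1) hp.2.2.2
    have h3 : (0:ℝ) < Real.sqrt (‖p.1‖^2 + p.2^2) := lt_of_lt_of_le h1 hk.1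
    have h4 : (c₁ * ‖p.1‖) ^ (-(d:ℝ)) ≤ (Real.sqrt (‖p.1‖^2 + p.2^2)) ^ (-(d:ℝ)) :=
      Real.rpow_le_rpow_of_nonpos h3 hk.2 hdnn
    calc ENNReal.ofReal (c₁ ^ (-(d:ℝ))) * u p.1
        = ENNReal.ofReal ((c₁ * ‖p.1‖) ^ (-(d:ℝ))) := by
          simp only [hu]
          rw [← ENNReal.ofReal_mul (Real.rpow_nonneg hc₁0.le _),
            ← Real.mul_rpow hc₁0.le (norm_nonneg _)]
      _ ≤ _ := ENNReal.ofReal_le_ofReal h4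
  -- lower bound
  have step2 : ∀ x, ENNReal.ofReal (f x * ‖x‖ ^ (-(d:ℝ)))
      ≤ u x * volume {t : ℝ | (x, t) ∈ W} := by
    intro x
    rw [mul_comm (f x), ENNReal.ofReal_mul (Real.rpow_nonneg (norm_nonneg x) _)]
    exact mul_le_mul_right (slice_lb x) _
  have lower : ENNReal.ofReal (c₁ ^ (-(d:ℝ))) *
      (∫⁻ x in U, ENNReal.ofReal (f x * ‖x‖ ^ (-(d:ℝ))))
      ≤ ∫⁻ p in W, ENNReal.ofReal ((Real.sqrt (‖p.1‖^2 + p.2^2)) ^ (-(d:ℝ))) := by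
    calc ENNReal.ofReal (c₁ ^ (-(d:ℝ))) *
        (∫⁻ x in U, ENNReal.ofReal (f x * ‖x‖ ^ (-(d:ℝ))))
        ≤ ENNReal.ofReal (c₁ ^ (-(d:ℝ))) * ∫⁻ x, u x * volume {t : ℝ | (x, t) ∈ W} :=
          mul_le_mul_right ((setLIntegral_le_lintegral _ _).trans (lintegral_mono step2)) _
      _ = ∫⁻ x, (fun y => ENNReal.ofReal (c₁ ^ (-(d:ℝ))) * u y) x * volume {t : ℝ | (x, t) ∈ W} := by
          rw [← lintegral_const_mul' _ _ ENNReal.ofReal_ne_top]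
          congr 1; funext x; ring
      _ = ∫⁻ p in W, (fun y => ENNReal.ofReal (c₁ ^ (-(d:ℝ))) * u y) p.1 :=
          (fub _ (hum.const_mul _)).symm
      _ ≤ _ := lintegral_mono_ae ((ae_restrict_mem hWmeas).mono (fun p hp => glb p hp))
  -- upper bound
  have upper : (∫⁻ p in W, ENNReal.ofReal ((Real.sqrt (‖p.1‖^2 + p.2^2)) ^ (-(d:ℝ))))
      ≤ (∫⁻ x in S, ENNReal.ofReal (f x * ‖x‖ ^ (-(d:ℝ))))
        + ENNReal.ofReal (2*M) * ∫⁻ x in S, u x := by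
    calc (∫⁻ p in W, ENNReal.ofReal ((Real.sqrt (‖p.1‖^2 + p.2^2)) ^ (-(d:ℝ))))
        ≤ ∫⁻ p in W, u p.1 := lintegral_mono_ae ((ae_restrict_mem hWmeas).mono gub)
      _ = ∫⁻ x, u x * volume {t : ℝ | (x, t) ∈ W} := fub u hum
      _ ≤ ∫⁻ x, u x * S.indicator (fun x => ENNReal.ofReal (f x + 2*M)) x :=
          lintegral_mono (fun x => mul_le_mul_right (slice_ub x) _)
      _ = ∫⁻ x, S.indicator (fun x => u x * ENNReal.ofReal (f x + 2*M)) x := by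
          congr 1; funext x
          by_cases hx : x ∈ S <;> simp [Set.indicator, hx]
      _ = ∫⁻ x in S, u x * ENNReal.ofReal (f x + 2*M) := lintegral_indicator hSmeas _
      _ = ∫⁻ x in S, (ENNReal.ofReal (f x * ‖x‖ ^ (-(d:ℝ))) + ENNReal.ofReal (2*M) * u x) := by
          apply lintegral_congr
          intro x
          simp only [hu]
          rw [← ENNReal.ofReal_mul (Real.rpow_nonneg (norm_nonneg x) _),
            ← ENNReal.ofReal_mul (by linarith : (0:ℝ) ≤ 2*M),
            ← ENNReal.ofReal_add (mul_nonneg (hf0 x) (Real.rpow_nonneg (norm_nonneg x) _))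
              (mul_nonneg (by linarith) (Real.rpow_nonneg (norm_nonneg x) _))]
          congr 1; ring
      _ = _ := by
          rw [lintegral_add_left hFm, lintegral_const_mul' _ _ ENNReal.ofReal_ne_top]
  -- finiteness of the tail integral
  have hdim : (Module.finrank ℝ (EuclideanSpace ℝ (Fin (d - 1))) : ℝ) < (d:ℝ) := by
    rw [finrank_euclideanSpace_fin]
    exact_mod_cast Nat.sub_lt (by omega) one_pos
  have hfin := finite_integral_one_add_norm
    (μ := (volume : Measure (EuclideanSpace ℝ (Fin (d - 1))))) hdim
  have hC : (∫⁻ x in U, u x) < ⊤ := by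
    have hb : ∀ x ∈ U, u x ≤ ENNReal.ofReal ((2:ℝ) ^ (d:ℝ) * (1 + ‖x‖) ^ (-(d:ℝ))) := by
      intro x hx
      simp only [hu]
      apply ENNReal.ofReal_le_ofReal
      have hx1 : (1:ℝ) < ‖x‖ := hx
      have h1 : (0:ℝ) < (1 + ‖x‖)/2 := by linarith
      have h2 : (1 + ‖x‖)/2 ≤ ‖x‖ := by linarith
      calc ‖x‖ ^ (-(d:ℝ)) ≤ ((1 + ‖x‖)/2) ^ (-(d:ℝ)) :=
            Real.rpow_le_rpow_of_nonpos h1 h2 hdnn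
        _ = (2:ℝ)^(d:ℝ) * (1 + ‖x‖) ^ (-(d:ℝ)) := by
            rw [Real.div_rpow (by linarith) (by norm_num),
              Real.rpow_neg (by norm_num : (0:ℝ) ≤ 2), div_inv_eq_mul, mul_comm]
    calc (∫⁻ x in U, u x)
        ≤ ∫⁻ x in U, ENNReal.ofReal ((2:ℝ)^(d:ℝ) * (1 + ‖x‖) ^ (-(d:ℝ))) :=
          setLIntegral_mono' hUmeas hb
      _ ≤ ∫⁻ x, ENNReal.ofReal ((2:ℝ)^(d:ℝ) * (1 + ‖x‖) ^ (-(d:ℝ))) :=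
          setLIntegral_le_lintegral _ _
      _ = ENNReal.ofReal ((2:ℝ)^(d:ℝ)) * ∫⁻ x, ENNReal.ofReal ((1 + ‖x‖) ^ (-(d:ℝ))) := by
          rw [← lintegral_const_mul' _ _ ENNReal.ofReal_ne_top]
          congr 1; funext x
          rw [← ENNReal.ofReal_mul (by positivity)]
      _ < ⊤ := ENNReal.mul_lt_top ENNReal.ofReal_lt_top hfin
  -- rewrite the integral over A as an integral over W
  have hJW : (∫⁻ p in A, ENNReal.ofReal ((Real.sqrt (‖p.1‖ ^ 2 + p.2 ^ 2)) ^ (-(d:ℝ))))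
      = ∫⁻ p in W, ENNReal.ofReal ((Real.sqrt (‖p.1‖ ^ 2 + p.2 ^ 2)) ^ (-(d:ℝ))) := by
    rw [hres]
  refine ⟨c₁, hc₁1, ?_, ?_⟩
  · intro p hp
    obtain ⟨h1, h2, h3⟩ := hAmem p hp
    exact key p.1 p.2 h1.le h2.le h3
  · rw [hJW]
    set I := ∫⁻ x in U, ENNReal.ofReal (f x * ‖x‖ ^ (-(d:ℝ))) with hIdef
    set JW := ∫⁻ p in W, ENNReal.ofReal ((Real.sqrt (‖p.1‖ ^ 2 + p.2 ^ 2)) ^ (-(d:ℝ))) with hJdef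
    have hc₁ne : ENNReal.ofReal (c₁ ^ (-(d:ℝ))) ≠ 0 :=
      (ENNReal.ofReal_pos.2 (Real.rpow_pos_of_pos hc₁0 _)).ne'
    rcases eq_or_ne I ⊤ with hItop | hIne
    · refine ⟨1, one_pos, lower, ?_, ?_⟩
      · simp [hItop]
      · have hJt : JW = ⊤ := by
          have h5 := lower
          rw [hItop, ENNReal.mul_top hc₁ne] at h5
          exact top_le_iff.1 h5
        simp [hJt, hItop]
    · rcases eq_or_ne I 0 with hI0 | hIpos
      · have hSnull : volume S = 0 := by
          have hae := (lintegral_eq_zero_iff hFm).1 hI0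
          have hsub : S ⊆ {x | ¬ (ENNReal.ofReal (f x * ‖x‖ ^ (-(d:ℝ))) = 0)} := by
            intro x hx
            simp only [mem_setOf_eq]
            have h1 : (0:ℝ) < ‖x‖ := lt_trans one_pos hx.1
            have h2 : 0 < f x * ‖x‖ ^ (-(d:ℝ)) :=
              mul_pos hx.2 (Real.rpow_pos_of_pos h1 _)
            exact (ENNReal.ofReal_pos.2 h2).ne'
          have hnull : volume.restrict U {x | ¬ (ENNReal.ofReal (f x * ‖x‖ ^ (-(d:ℝ))) = 0)} = 0 := by
            have h6 := hae
            rw [Filter.EventuallyEq, ae_iff] at h6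
            simpa using h6
          have h7 : volume.restrict U S = 0 := measure_mono_null hsub hnull
          rwa [Measure.restrict_apply hSmeas, Set.inter_eq_self_of_subset_left hSsubU] at h7
        have hJ0 : JW = 0 := by
          have h1 : (∫⁻ x in S, ENNReal.ofReal (f x * ‖x‖ ^ (-(d:ℝ)))) = 0 :=
            setLIntegral_measure_zero _ _ hSnull
          have h2 : (∫⁻ x in S, u x) = 0 := setLIntegral_measure_zero _ _ hSnull
          have h8 := upper
          rw [h1, h2, mul_zero, add_zero] at h8
          exact le_antisymm h8 zero_le
        refine ⟨1, one_pos, lower, ?_, ?_⟩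
        · rw [hJ0]; exact zero_le
        · simp [hJ0, hI0]
      · have hJfin : JW < ⊤ := by
          refine lt_of_le_of_lt upper ?_
          have h1 : (∫⁻ x in S, ENNReal.ofReal (f x * ‖x‖ ^ (-(d:ℝ)))) ≤ I :=
            lintegral_mono_set hSsubU
          have h2 : (∫⁻ x in S, u x) ≤ ∫⁻ x in U, u x := lintegral_mono_set hSsubU
          exact ENNReal.add_lt_top.2 ⟨lt_of_le_of_lt h1 hIne.lt_top,
            ENNReal.mul_lt_top ENNReal.ofReal_lt_top (lt_of_le_of_lt h2 hC)⟩
        have hrfin : JW / I ≠ ⊤ := (ENNReal.div_lt_top hJfin.ne hIpos).ne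
        refine ⟨(JW / I).toReal + 1, by positivity, lower, ?_, iff_of_true hJfin hIne.lt_top⟩
        have h2 : JW / I ≤ ENNReal.ofReal ((JW / I).toReal + 1) := by
          calc JW / I = ENNReal.ofReal (JW / I).toReal := (ENNReal.ofReal_toReal hrfin).symm
            _ ≤ _ := ENNReal.ofReal_le_ofReal (by linarith)
        calc JW = JW / I * I := (ENNReal.div_mul_cancel hIpos hIne).symm
          _ ≤ ENNReal.ofReal ((JW / I).toReal + 1) * I := mul_le_mul_left h2 _
end

section
/- Let g : (0,∞) → [0,∞) be nonincreasing and let r > 0. There is a dimensional constant c = c(d) > 0 such that for every w ∈ ℝ^d with |w| ≤ r, ∫_{B(0,r) ∩ B(w,r)} g(|w - y|) dy ≥ c ∫_{B(0,r)} g(|y|) dy. -/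
open Metric Set MeasureTheory ENNReal
open scoped RealInnerProductSpace

/-- The closed cone of aperture `π/3` around direction `a`. -/
def coneSet {d : ℕ} (a : EuclideanSpace ℝ (Fin d)) : Set (EuclideanSpace ℝ (Fin d)) :=
  {u | ‖u‖ / 2 ≤ ⟪a, u⟫}

theorem cone_intersection_lower_bound
    (d : ℕ) (hd : 1 ≤ d) :
    ∃ c : ℝ, 0 < c ∧
      ∀ (g : ℝ → ℝ), (∀ t > 0, 0 ≤ g t) → (∀ s t : ℝ, 0 < s → s ≤ t → g t ≤ g s) →
        ∀ r : ℝ, 0 < r → ∀ w : EuclideanSpace ℝ (Fin d), ‖w‖ ≤ r →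
          ENNReal.ofReal c *
              (∫⁻ y in ball (0 : EuclideanSpace ℝ (Fin d)) r, ENNReal.ofReal (g ‖y‖)) ≤
            ∫⁻ y in ball (0 : EuclideanSpace ℝ (Fin d)) r ∩ ball w r,
              ENNReal.ofReal (g (dist w y)) := by
  classical
  set E := EuclideanSpace ℝ (Fin d) with hE
  -- a fixed unit vector
  set e₀ : E := EuclideanSpace.single (⟨0, hd⟩ : Fin d) (1 : ℝ) with he₀
  have he₀norm : ‖e₀‖ = 1 := by
    rw [he₀, EuclideanSpace.norm_single]; norm_num
  have hcompact : IsCompact (sphere (0 : E) 1) := isCompact_sphere _ _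
  -- open cover of the sphere by open caps
  have hcov : sphere (0 : E) 1 ⊆ ⋃ a ∈ sphere (0 : E) 1, {u : E | 1 / 2 < ⟪a, u⟫} := by
    intro u hu
    have hu1 : ‖u‖ = 1 := mem_sphere_zero_iff_norm.mp hu
    refine mem_iUnion₂.mpr ⟨u, hu, ?_⟩
    have : ⟪u, u⟫ = (1 : ℝ) := by
      rw [real_inner_self_eq_norm_sq, hu1]; norm_num
    simp only [Set.mem_setOf_eq, this]
    norm_num
  obtain ⟨B, hBsub, hBfin, hBcov⟩ :=
    hcompact.elim_finite_subcover_image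
      (fun a _ => isOpen_lt continuous_const (Continuous.inner continuous_const continuous_id))
      hcov
  set T : Finset E := hBfin.toFinset with hT
  have hTmem : ∀ a : E, a ∈ T ↔ a ∈ B := fun a => hBfin.mem_toFinset
  have hTsphere : ∀ a ∈ T, ‖a‖ = 1 := fun a ha =>
    mem_sphere_zero_iff_norm.mp (hBsub ((hTmem a).mp ha))
  -- every nonzero vector is in some cone; also 0 is in every cone
  have hTcone : ∀ u : E, u ≠ 0 → ∃ a ∈ T, u ∈ coneSet a := by
    intro u hu
    have hnorm : (0 : ℝ) < ‖u‖ := norm_pos_iff.mpr hu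
    have hmem : (‖u‖⁻¹ • u) ∈ sphere (0 : E) 1 := by
      rw [mem_sphere_zero_iff_norm, norm_smul, norm_inv, norm_norm]
      field_simp
    obtain ⟨a, haB, hau⟩ := mem_iUnion₂.mp (hBcov hmem)
    refine ⟨a, (hTmem a).mpr haB, ?_⟩
    have h2 : 1 / 2 < ⟪a, ‖u‖⁻¹ • u⟫ := hau
    rw [real_inner_smul_right] at h2
    have : ‖u‖ * (1 / 2) < ‖u‖ * (‖u‖⁻¹ * ⟪a, u⟫) := by
      exact mul_lt_mul_of_pos_left h2 hnorm
    rw [← mul_assoc, mul_inv_cancel₀ (ne_of_gt hnorm), one_mul] at this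
    simp only [coneSet, Set.mem_setOf_eq]
    show ‖u‖ / 2 ≤ ⟪a, u⟫
    linarith
  -- T is nonempty
  have hTne : T.Nonempty := by
    obtain ⟨a, ha, _⟩ := hTcone e₀ (by
      intro h; rw [h, norm_zero] at he₀norm; norm_num at he₀norm)
    exact ⟨a, ha⟩
  have hTcard : 0 < T.card := Finset.card_pos.mpr hTne
  refine ⟨1 / T.card, by positivity, ?_⟩
  intro g hg hanti r hr w hw
  -- the direction of w (or e₀ if w = 0)
  set v : E := if hw0 : w = 0 then e₀ else ‖w‖⁻¹ • w with hv
  have hvnorm : ‖v‖ = 1 := by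
    rw [hv]
    split_ifs with hw0
    · exact he₀norm
    · rw [norm_smul, norm_inv, norm_norm]
      exact inv_mul_cancel₀ (norm_ne_zero_iff.mpr hw0)
  have hvw : ∀ u : E, u ∈ coneSet v → ‖w‖ * ‖u‖ / 2 ≤ ⟪w, u⟫ := by
    intro u hu
    simp only [coneSet, Set.mem_setOf_eq] at hu
    by_cases hw0 : w = 0
    · simp [hw0]
    · change ‖u‖ / 2 ≤ ⟪v, u⟫ at hu
      rw [hv, dif_neg hw0, real_inner_smul_left] at hu
      have hnw : (0 : ℝ) < ‖w‖ := norm_pos_iff.mpr hw0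
      have := mul_le_mul_of_nonneg_left hu (le_of_lt hnw)
      rw [← mul_assoc, mul_inv_cancel₀ (ne_of_gt hnw), one_mul] at this
      linarith [this]
  -- NoAtoms on volume
  have hnontriv : Nontrivial E := nontrivial_of_ne e₀ 0 (by
    intro h; rw [h, norm_zero] at he₀norm; norm_num at he₀norm)
  have h0 : (volume : Measure E) {(0 : E)} = 0 := measure_singleton _
  -- abbreviations
  set f : E → ℝ≥0∞ := fun y => ENNReal.ofReal (g ‖y‖) with hf
  set I : ℝ≥0∞ := ∫⁻ y in ball (0 : E) r, f y with hI
  set J : E → ℝ≥0∞ := fun a => ∫⁻ y in ball (0 : E) r ∩ coneSet a, f y with hJ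
  -- Step 1: I ≤ ∑ a in T, J a
  have step1 : I ≤ ∑ a ∈ T, J a := by
    have hsub : ball (0 : E) r ⊆ ⋃ a : T, (ball (0 : E) r ∩ coneSet (a : E)) := by
      intro u hu
      by_cases hu0 : u = 0
      · obtain ⟨a, haT⟩ := hTne
        refine mem_iUnion.mpr ⟨⟨a, haT⟩, hu, ?_⟩
        subst hu0
        show ‖(0 : E)‖ / 2 ≤ ⟪a, (0 : E)⟫
        rw [inner_zero_right, norm_zero]
        norm_num
      · obtain ⟨a, haT, hua⟩ := hTcone u hu0
        exact mem_iUnion.mpr ⟨⟨a, haT⟩, hu, hua⟩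
    calc I ≤ ∫⁻ y in ⋃ a : T, (ball (0 : E) r ∩ coneSet (a : E)), f y :=
          lintegral_mono_set hsub
      _ ≤ ∑' a : T, ∫⁻ y in ball (0 : E) r ∩ coneSet (a : E), f y :=
          lintegral_iUnion_le _ _
      _ = ∑ a : T, J (a : E) := by rw [tsum_fintype]
      _ = ∑ a ∈ T, J a := Finset.sum_coe_sort T J
  -- Step 2: each J a equals J v
  have step2 : ∀ a ∈ T, J a = J v := by
    intro a ha
    have hva : ‖v‖ = ‖a‖ := by rw [hvnorm, hTsphere a ha]
    set e : E ≃ₗᵢ[ℝ] E := Submodule.reflection (ℝ ∙ (v - a))ᗮ with he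
    have heva : e v = a := Submodule.reflection_sub hva
    have hmp : MeasurePreserving e volume volume := e.measurePreserving
    have hemb : MeasurableEmbedding e := e.toHomeomorph.measurableEmbedding
    have himg : (e : E → E) '' (ball (0 : E) r ∩ coneSet v) = ball (0 : E) r ∩ coneSet a := by
      ext y
      constructor
      · rintro ⟨x, ⟨hx1, hx2⟩, rfl⟩
        constructor
        · rw [mem_ball_zero_iff] at hx1 ⊢
          rwa [e.norm_map]
        · simp only [coneSet, Set.mem_setOf_eq] at hx2 ⊢
          change ‖e x‖ / 2 ≤ ⟪a, e x⟫
          rw [e.norm_map, ← heva, e.inner_map_map]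
          exact hx2
      · rintro ⟨h1, h2⟩
        refine ⟨e.symm y, ⟨?_, ?_⟩, e.apply_symm_apply y⟩
        · rw [mem_ball_zero_iff] at h1 ⊢
          rwa [e.symm.norm_map]
        · simp only [coneSet, Set.mem_setOf_eq] at h2 ⊢
          change ‖e.symm y‖ / 2 ≤ ⟪v, e.symm y⟫
          rw [e.symm.norm_map]
          have : ⟪v, e.symm y⟫ = ⟪a, y⟫ := by
            rw [← heva, ← e.inner_map_map v (e.symm y), e.apply_symm_apply]
          rw [this]
          exact h2
    have hkey := hmp.setLIntegral_comp_emb hemb f (ball (0 : E) r ∩ coneSet v)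
    rw [himg] at hkey
    show (∫⁻ y in ball (0 : E) r ∩ coneSet a, f y) = ∫⁻ y in ball (0 : E) r ∩ coneSet v, f y
    rw [← hkey]
    exact lintegral_congr fun x => by simp only [hf, e.norm_map]
  -- Step 3: J v ≤ RHS
  have step3 : J v ≤ ∫⁻ y in ball (0 : E) r ∩ ball w r, ENNReal.ofReal (g (dist w y)) := by
    set S : Set E := (ball (0 : E) r ∩ coneSet v) \ {0} with hS
    have hae : S =ᵐ[volume] ((ball (0 : E) r ∩ coneSet v : Set E)) := by
      refine diff_ae_eq_self.mpr ?_
      exact measure_mono_null (Set.inter_subset_right) h0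
    have hJS : J v = ∫⁻ u in S, f u := (setLIntegral_congr hae).symm
    -- map u ↦ w - u
    have hmp : MeasurePreserving (fun u : E => w - u) volume volume := by
      have h1 := Measure.measurePreserving_neg (volume : Measure E)
      have h2 := measurePreserving_add_left (volume : Measure E) w
      have h3 := h2.comp h1
      simpa [Function.comp_def, sub_eq_add_neg] using h3
    have hemb : MeasurableEmbedding (fun u : E => w - u) :=
      (MeasurableEquiv.subLeft w).measurableEmbedding
    have hcomp := hmp.setLIntegral_comp_emb hemb
      (fun y => ENNReal.ofReal (g (dist w y))) S
    have hfeq : ∀ u : E, ENNReal.ofReal (g (dist w (w - u))) = f u := by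
      intro u
      have : dist w (w - u) = ‖u‖ := by
        rw [dist_eq_norm]
        congr 1
        abel
      rw [this, hf]
    have hJS2 : J v = ∫⁻ y in (fun u : E => w - u) '' S, ENNReal.ofReal (g (dist w y)) := by
      rw [hJS, ← hcomp]
      exact lintegral_congr fun u => (hfeq u).symm
    have himg : (fun u : E => w - u) '' S ⊆ ball (0 : E) r ∩ ball w r := by
      rintro y ⟨u, hu, rfl⟩
      obtain ⟨⟨hub, huc⟩, hu0⟩ := hu
      have hu0' : u ≠ 0 := by simpa using hu0
      have hnu : (0 : ℝ) < ‖u‖ := norm_pos_iff.mpr hu0'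
      have hur : ‖u‖ < r := mem_ball_zero_iff.mp hub
      have hinner : ‖w‖ * ‖u‖ / 2 ≤ ⟪w, u⟫ := hvw u huc
      constructor
      · rw [mem_ball_zero_iff]
        have hsq : ‖w - u‖ ^ 2 = ‖w‖ ^ 2 - 2 * ⟪w, u⟫ + ‖u‖ ^ 2 :=
          norm_sub_sq_real w u
        have hlt : ‖w - u‖ ^ 2 < r ^ 2 := by
          rw [hsq]
          have key : ‖w‖ ^ 2 - ‖w‖ * ‖u‖ + ‖u‖ ^ 2 < r ^ 2 := by
            nlinarith [mul_pos (sub_pos.mpr hur) (show (0 : ℝ) < r + ‖u‖ - ‖w‖ by linarith),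
              mul_nonneg (norm_nonneg w) (sub_nonneg.mpr hw)]
          nlinarith [hinner]
        nlinarith [norm_nonneg (w - u), hlt]
      · rw [mem_ball]
        rw [dist_eq_norm, sub_sub_cancel_left, norm_neg]
        exact hur
    rw [hJS2]
    exact lintegral_mono_set himg
  -- assemble
  have hsum : ∑ a ∈ T, J a = (T.card : ℝ≥0∞) * J v := by
    rw [Finset.sum_congr rfl step2, Finset.sum_const, nsmul_eq_mul]
  have hcardR : (0 : ℝ) < T.card := by exact_mod_cast hTcard
  have hmul : ENNReal.ofReal (1 / T.card) * (T.card : ℝ≥0∞) = 1 := by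
    rw [← ENNReal.ofReal_natCast T.card, ← ENNReal.ofReal_mul (le_of_lt (one_div_pos.mpr hcardR)),
      one_div, inv_mul_cancel₀ hcardR.ne', ENNReal.ofReal_one]
  have hfinal : ENNReal.ofReal (1 / T.card) * I ≤ J v := by
    calc ENNReal.ofReal (1 / T.card) * I
        ≤ ENNReal.ofReal (1 / T.card) * ((T.card : ℝ≥0∞) * J v) := by
          exact mul_le_mul_right (le_trans step1 (le_of_eq hsum)) _
      _ = (ENNReal.ofReal (1 / T.card) * (T.card : ℝ≥0∞)) * J v := (mul_assoc _ _ _).symm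
      _ = 1 * J v := by rw [hmul]
      _ = J v := one_mul _
  exact le_trans hfinal step3
end
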